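/- Let $U$ and $V$ be two $N$-dimensional random vectors with probability density functions $f_U$ and $f_V$ that are nonzero almost everywhere. Then the total variation distance satisfies $d_{TV}(U,V) = \int_0^1 \mathbb{P}\left(\frac{f_U(V)}{f_V(V)} < x\right) dx$. -/

import Mathlib

open MeasureTheory
open scoped ENNReal

/-- Total variation distance between the laws of two random variables. -/
noncomputable def dTV {Ω E : Type*} [MeasurableSpace Ω] [MeasurableSpace E]
    (μ : Measure Ω) (U V : Ω → E) : ℝ :=
  ⨆ A : {s : Set E // MeasurableSet s},
    |(μ (U ⁻¹' A.1)).toReal - (μ (V ⁻¹' A.1)).toReal|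

private lemma aux_toReal {a b c : ℝ≥0∞} (hb : b ≠ ⊤) (hc : c ≠ ⊤) (h : a ≤ b + c) :
    a.toReal - b.toReal ≤ c.toReal := by
  rw [sub_le_iff_le_add]
  calc a.toReal ≤ (b + c).toReal := ENNReal.toReal_mono (by finiteness) h
    _ = b.toReal + c.toReal := ENNReal.toReal_add hb hc
    _ = c.toReal + b.toReal := add_comm _ _

private lemma aux_ofReal_max (a : ℝ) : ENNReal.ofReal (max a 0) = ENNReal.ofReal a := by
  rcases le_total a 0 with h | h
  · rw [max_eq_right h, ENNReal.ofReal_zero, ENNReal.ofReal_of_nonpos h]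
  · rw [max_eq_left h]

/-- The key pointwise identity. -/
private lemma aux_pointwise (a b : ℝ) :
    ENNReal.ofReal b * ENNReal.ofReal (1 - max (a / b) 0) =
      ENNReal.ofReal b - ENNReal.ofReal a := by
  rcases le_or_gt b 0 with hb | hb
  · rw [ENNReal.ofReal_of_nonpos hb, zero_mul, zero_tsub]
  · have hb0 : b ≠ 0 := ne_of_gt hb
    have hmax : max (a / b) 0 = max a 0 / b := by
      rw [← max_div_div_right hb.le, zero_div]
    rw [hmax, ← ENNReal.ofReal_mul hb.le, mul_sub, mul_one,
      mul_div_cancel₀ _ hb0, ENNReal.ofReal_sub _ (le_max_right a 0), aux_ofReal_max]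

theorem stmt0 {Ω : Type*} [MeasurableSpace Ω] (μ : Measure Ω) [IsProbabilityMeasure μ]
    {N : ℕ} (U V : Ω → (Fin N → ℝ)) (hU : Measurable U) (hV : Measurable V)
    (fU fV : (Fin N → ℝ) → ℝ) (hfU : Measurable fU) (hfV : Measurable fV)
    (hUd : Measure.map U μ = volume.withDensity (fun x => ENNReal.ofReal (fU x)))
    (hVd : Measure.map V μ = volume.withDensity (fun x => ENNReal.ofReal (fV x)))
    (hfU0 : ∀ᵐ x ∂(volume : Measure (Fin N → ℝ)), fU x ≠ 0)
    (hfV0 : ∀ᵐ x ∂(volume : Measure (Fin N → ℝ)), fV x ≠ 0) :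
    dTV μ U V
      = ∫ x in Set.Ioc (0:ℝ) 1, (μ {ω | fU (V ω) / fV (V ω) < x}).toReal := by
  classical
  set gU : (Fin N → ℝ) → ℝ≥0∞ := fun x => ENNReal.ofReal (fU x) with hgU
  set gV : (Fin N → ℝ) → ℝ≥0∞ := fun x => ENNReal.ofReal (fV x) with hgV
  have mgU : Measurable gU := hfU.ennreal_ofReal
  have mgV : Measurable gV := hfV.ennreal_ofReal
  -- total masses
  have massU : ∫⁻ y, gU y = 1 := by
    have h : IsProbabilityMeasure (μ.map U) := Measure.isProbabilityMeasure_map hU.aemeasurable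
    rw [hUd] at h
    have h1 := h.measure_univ
    rwa [withDensity_apply _ MeasurableSet.univ, setLIntegral_univ] at h1
  have massV : ∫⁻ y, gV y = 1 := by
    have h : IsProbabilityMeasure (μ.map V) := Measure.isProbabilityMeasure_map hV.aemeasurable
    rw [hVd] at h
    have h1 := h.measure_univ
    rwa [withDensity_apply _ MeasurableSet.univ, setLIntegral_univ] at h1
  set I : ℝ≥0∞ := ∫⁻ y, (gV y - gU y) with hI
  set J : ℝ≥0∞ := ∫⁻ y, (gU y - gV y) with hJ
  have hIle : I ≤ 1 := by
    calc I ≤ ∫⁻ y, gV y := lintegral_mono fun y => tsub_le_self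
      _ = 1 := massV
  have hJle : J ≤ 1 := by
    calc J ≤ ∫⁻ y, gU y := lintegral_mono fun y => tsub_le_self
      _ = 1 := massU
  have hIne : I ≠ ⊤ := (lt_of_le_of_lt hIle ENNReal.one_lt_top).ne
  have hJne : J ≠ ⊤ := (lt_of_le_of_lt hJle ENNReal.one_lt_top).ne
  have hIJ : I = J := by
    have key : (fun y => gU y + (gV y - gU y)) = fun y => gV y + (gU y - gV y) := by
      funext y
      rcases le_total (gU y) (gV y) with h | h
      · rw [add_tsub_cancel_of_le h, tsub_eq_zero_of_le h, add_zero]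
      · rw [tsub_eq_zero_of_le h, add_zero, add_tsub_cancel_of_le h]
    have h1 : ∫⁻ y, (gU y + (gV y - gU y)) = 1 + I := by
      rw [lintegral_add_left mgU, massU]
    have h2 : ∫⁻ y, (gV y + (gU y - gV y)) = 1 + J := by
      rw [lintegral_add_left mgV, massV]
    have h3 : (1 : ℝ≥0∞) + I = 1 + J := by
      rw [← h1, ← h2, key]
    exact (ENNReal.add_right_inj (by norm_num)).1 h3
  -- measures of sets
  have hmapU : ∀ A : Set (Fin N → ℝ), MeasurableSet A → μ (U ⁻¹' A) = ∫⁻ y in A, gU y := by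
    intro A hA
    rw [← Measure.map_apply hU hA, hUd, withDensity_apply _ hA]
  have hmapV : ∀ A : Set (Fin N → ℝ), MeasurableSet A → μ (V ⁻¹' A) = ∫⁻ y in A, gV y := by
    intro A hA
    rw [← Measure.map_apply hV hA, hVd, withDensity_apply _ hA]
  -- upper bound for LHS
  have hAfinU : ∀ A : Set (Fin N → ℝ), (∫⁻ y in A, gU y) ≠ ⊤ := fun A =>
    ne_top_of_le_ne_top (by rw [massU]; exact ENNReal.one_ne_top) (setLIntegral_le_lintegral A gU)
  have hAfinV : ∀ A : Set (Fin N → ℝ), (∫⁻ y in A, gV y) ≠ ⊤ := fun A =>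
    ne_top_of_le_ne_top (by rw [massV]; exact ENNReal.one_ne_top) (setLIntegral_le_lintegral A gV)
  have bound : ∀ A : {s : Set (Fin N → ℝ) // MeasurableSet s},
      |(μ (U ⁻¹' A.1)).toReal - (μ (V ⁻¹' A.1)).toReal| ≤ I.toReal := by
    intro ⟨A, hA⟩
    rw [hmapU A hA, hmapV A hA, abs_sub_le_iff]
    constructor
    · have h : (∫⁻ y in A, gU y) ≤ (∫⁻ y in A, gV y) + J := by
        calc (∫⁻ y in A, gU y) ≤ ∫⁻ y in A, (gV y + (gU y - gV y)) :=
              lintegral_mono fun y => le_add_tsub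
          _ = (∫⁻ y in A, gV y) + ∫⁻ y in A, (gU y - gV y) := lintegral_add_left mgV _
          _ ≤ (∫⁻ y in A, gV y) + J :=
              add_le_add le_rfl (setLIntegral_le_lintegral A _)
      rw [hIJ]
      exact aux_toReal (hAfinV A) hJne h
    · have h : (∫⁻ y in A, gV y) ≤ (∫⁻ y in A, gU y) + I := by
        calc (∫⁻ y in A, gV y) ≤ ∫⁻ y in A, (gU y + (gV y - gU y)) :=
              lintegral_mono fun y => le_add_tsub
          _ = (∫⁻ y in A, gU y) + ∫⁻ y in A, (gV y - gU y) := lintegral_add_left mgU _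
          _ ≤ (∫⁻ y in A, gU y) + I :=
              add_le_add le_rfl (setLIntegral_le_lintegral A _)
      exact aux_toReal (hAfinU A) hIne h
  -- attainment
  set A₀ : Set (Fin N → ℝ) := {x | fU x < fV x} with hA₀def
  have hA₀ : MeasurableSet A₀ := measurableSet_lt hfU hfV
  have hattain : |(μ (U ⁻¹' A₀)).toReal - (μ (V ⁻¹' A₀)).toReal| = I.toReal := by
    have hres : I = ∫⁻ y in A₀, (gV y - gU y) := by
      rw [hI, ← lintegral_indicator hA₀]
      refine lintegral_congr fun y => ?_
      by_cases hy : y ∈ A₀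
      · rw [Set.indicator_of_mem hy]
      · rw [Set.indicator_of_notMem hy]
        have : fV y ≤ fU y := not_lt.1 hy
        exact tsub_eq_zero_of_le (ENNReal.ofReal_le_ofReal this)
    have hle : (∫⁻ y in A₀, gU y) ≤ ∫⁻ y in A₀, gV y :=
      setLIntegral_mono mgV fun y hy => ENNReal.ofReal_le_ofReal (le_of_lt hy)
    have hsub : I = (∫⁻ y in A₀, gV y) - ∫⁻ y in A₀, gU y := by
      rw [hres, lintegral_sub mgU (hAfinU A₀)]
      exact (ae_restrict_iff' hA₀).2 (Filter.Eventually.of_forall fun y hy =>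
        ENNReal.ofReal_le_ofReal (le_of_lt hy))
    rw [hmapU A₀ hA₀, hmapV A₀ hA₀, abs_sub_comm, hsub,
      ENNReal.toReal_sub_of_le hle (hAfinV A₀)]
    exact abs_of_nonneg (by
      have := ENNReal.toReal_mono (hAfinV A₀) hle
      linarith)
  -- LHS = I.toReal
  have hLHS : dTV μ U V = I.toReal := by
    unfold dTV
    apply le_antisymm
    · exact ciSup_le bound
    · have hbdd : BddAbove (Set.range fun A : {s : Set (Fin N → ℝ) // MeasurableSet s} =>
          |(μ (U ⁻¹' A.1)).toReal - (μ (V ⁻¹' A.1)).toReal|) := by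
        refine ⟨I.toReal, ?_⟩
        rintro x ⟨A, rfl⟩
        exact bound A
      have := le_ciSup hbdd (⟨A₀, hA₀⟩ : {s : Set (Fin N → ℝ) // MeasurableSet s})
      rwa [hattain] at this
  rw [hLHS]
  -- RHS
  have hSmeas : ∀ x : ℝ, MeasurableSet {y : Fin N → ℝ | fU y / fV y < x} := fun x =>
    measurableSet_lt (hfU.div hfV) measurable_const
  have hpre : ∀ x : ℝ, μ {ω | fU (V ω) / fV (V ω) < x} =
      ∫⁻ y in {y : Fin N → ℝ | fU y / fV y < x}, gV y := by
    intro x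
    have : {ω | fU (V ω) / fV (V ω) < x} = V ⁻¹' {y | fU y / fV y < x} := rfl
    rw [this, hmapV _ (hSmeas x)]
  set F : ℝ → (Fin N → ℝ) → ℝ≥0∞ := fun x y => if fU y / fV y < x then gV y else 0 with hF
  have hFmeas : Measurable (Function.uncurry F) := by
    apply Measurable.ite
    · exact measurableSet_lt ((hfU.div hfV).comp measurable_snd) measurable_fst
    · exact mgV.comp measurable_snd
    · exact measurable_const
  have hinner : ∀ x : ℝ, (∫⁻ y in {y : Fin N → ℝ | fU y / fV y < x}, gV y) =
      ∫⁻ y, F x y := by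
    intro x
    rw [← lintegral_indicator (hSmeas x)]
    refine lintegral_congr fun y => ?_
    rw [Set.indicator_apply]
    rfl
  have hswap : (∫⁻ x in Set.Ioc (0:ℝ) 1, ∫⁻ y, F x y) =
      ∫⁻ y, ∫⁻ x in Set.Ioc (0:ℝ) 1, F x y := by
    exact lintegral_lintegral_swap hFmeas.aemeasurable
  have hinner2 : ∀ y : Fin N → ℝ, (∫⁻ x in Set.Ioc (0:ℝ) 1, F x y) = gV y - gU y := by
    intro y
    have hset : {x : ℝ | fU y / fV y < x} = Set.Ioi (fU y / fV y) := rfl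
    calc (∫⁻ x in Set.Ioc (0:ℝ) 1, F x y)
        = ∫⁻ x in Set.Ioc (0:ℝ) 1, ({x : ℝ | fU y / fV y < x}).indicator
            (fun _ => gV y) x := by
          refine lintegral_congr fun x => ?_
          rw [Set.indicator_apply]
          rfl
      _ = ∫⁻ x in Set.Ioi (fU y / fV y), (fun _ => gV y) x
            ∂(volume.restrict (Set.Ioc (0:ℝ) 1)) := by
          rw [hset] at *
          exact lintegral_indicator measurableSet_Ioi _
      _ = ∫⁻ x in Set.Ioi (fU y / fV y) ∩ Set.Ioc (0:ℝ) 1, (gV y) := by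
          rw [Measure.restrict_restrict measurableSet_Ioi]
      _ = gV y * volume (Set.Ioi (fU y / fV y) ∩ Set.Ioc (0:ℝ) 1) := by
          rw [setLIntegral_const]
      _ = gV y - gU y := by
          have hset2 : Set.Ioi (fU y / fV y) ∩ Set.Ioc (0:ℝ) 1 =
              Set.Ioc (max (fU y / fV y) 0) 1 := by
            ext x
            simp only [Set.mem_inter_iff, Set.mem_Ioi, Set.mem_Ioc, max_lt_iff]
            tauto
          rw [hset2, Real.volume_Ioc]
          exact aux_pointwise (fU y) (fV y)
  have hmono : ∀ x : ℝ, (∫⁻ y, F x y) ≤ 1 := by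
    intro x
    calc (∫⁻ y, F x y) ≤ ∫⁻ y, gV y := by
          refine lintegral_mono fun y => ?_
          by_cases h : fU y / fV y < x <;> simp [hF, h]
      _ = 1 := massV
  have hRHS : (∫ x in Set.Ioc (0:ℝ) 1, (μ {ω | fU (V ω) / fV (V ω) < x}).toReal) =
      I.toReal := by
    have heq : ∀ x : ℝ, (μ {ω | fU (V ω) / fV (V ω) < x}).toReal = (∫⁻ y, F x y).toReal := by
      intro x
      rw [hpre x, hinner x]
    simp_rw [heq]
    rw [integral_toReal]
    · congr 1
      rw [hswap]
      refine lintegral_congr fun y => hinner2 y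
    · exact (hFmeas.lintegral_prod_right').aemeasurable
    · exact Filter.Eventually.of_forall fun x => lt_of_le_of_lt (hmono x) (by norm_num)
  rw [hRHS]
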